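/- Let F ∈ F^n with radial function ρ. Then for each x ∈ S^n and each N(x) ∈ α_F(x) there exists a unique v(x) ∈ ∂ρ(x) such that N(x) = (−v(x) + ρ(x)x)/√(|v(x)|² + ρ(x)²), and moreover α_F(x) = { (−v + ρ(x)x)/√(|v|² + ρ(x)²) : v ∈ ∂ρ(x) }. -/

import Mathlib

open MeasureTheory Set
open scoped ENNReal RealInnerProductSpace NNReal

noncomputable section

/-- Euclidean space `ℝ^{n+1}`. -/
abbrev Euc (n : ℕ) : Type := EuclideanSpace ℝ (Fin (n + 1))

/-- The unit sphere `S^n ⊂ ℝ^{n+1}` centered at the origin. -/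
def uSphere (n : ℕ) : Set (Euc n) := Metric.sphere (0 : Euc n) 1

/-- The standard `n`-dimensional (Lebesgue/Hausdorff) measure `σ` on `S^n`. -/
def sphMeasure (n : ℕ) : Measure (Euc n) :=
  (μH[n] : Measure (Euc n)).restrict (uSphere n)

/-- A closed convex hypersurface `F ∈ 𝓕ⁿ` is the boundary of a compact convex set
containing the origin in its interior; we record the bounded convex body. -/
structure ConvexBodyO (n : ℕ) where
  carrier : Set (Euc n)
  isCompact : IsCompact carrier
  convex : Convex ℝ carrier
  zero_mem_interior : (0 : Euc n) ∈ interior carrier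

/-- The radial function `ρ` of `F`: `ρ(x) x ∈ F` for `x ∈ S^n`. -/
def radialFn {n : ℕ} (B : ConvexBodyO n) (x : Euc n) : ℝ :=
  sSup {t : ℝ | 0 ≤ t ∧ t • x ∈ B.carrier}

/-- The support function `h(N) = sup_{x ∈ S^n} ρ(x)⟨x,N⟩`. -/
def supportFn {n : ℕ} (B : ConvexBodyO n) (N : Euc n) : ℝ :=
  sSup ((fun x => radialFn B x * ⟪x, N⟫) '' uSphere n)

/-- The generalized Gauss map: `α_F(x)` is the set of outward unit normals of hyperplanes
supporting `F` at `ρ(x)x`. -/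
def gaussMap {n : ℕ} (B : ConvexBodyO n) (x : Euc n) : Set (Euc n) :=
  {N ∈ uSphere n | ∀ y ∈ B.carrier, ⟪y, N⟫ ≤ ⟪radialFn B x • x, N⟫}

/-- `α_F(ω) = ⋃_{x ∈ ω} α_F(x)`. -/
def gaussImage {n : ℕ} (B : ConvexBodyO n) (ω : Set (Euc n)) : Set (Euc n) :=
  ⋃ x ∈ ω, gaussMap B x

/-- A subset `ω ⊆ S^n` is spherically convex if the cone over `ω` with vertex at `O`
is convex. -/
def SphericallyConvex (n : ℕ) (ω : Set (Euc n)) : Prop :=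
  ω ⊆ uSphere n ∧ Convex ℝ {y : Euc n | ∃ t : ℝ, 0 ≤ t ∧ ∃ x ∈ ω, y = t • x}

/-- The dual set `ω* = {y ∈ S^n : ⟨x,y⟩ ≤ 0 ∀ x ∈ ω}`. -/
def dualSet (n : ℕ) (ω : Set (Euc n)) : Set (Euc n) :=
  {y ∈ uSphere n | ∀ x ∈ ω, ⟪x, y⟫ ≤ 0}

/-- The subdifferential `∂f(x₀)` of `f ∈ C(S^n)` at `x₀ ∈ S^n`: the set of tangent vectors
`v` at `x₀` (`⟨v,x₀⟩ = 0`) with `f(x)⟨-v + f(x₀)x₀, x⟩ ≤ f(x₀)²` for all `x ∈ S^n`. -/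
def subdiffS (n : ℕ) (f : Euc n → ℝ) (x₀ : Euc n) : Set (Euc n) :=
  {v : Euc n | ⟪v, x₀⟫ = 0 ∧ ∀ x ∈ uSphere n, f x * ⟪-v + f x₀ • x₀, x⟫ ≤ f x₀ ^ 2}

-- helpers
lemma norm_one_of_sphere {n : ℕ} {z : Euc n} (hz : z ∈ uSphere n) : ‖z‖ = 1 := by
  simpa [uSphere] using hz

lemma bodyBall {n : ℕ} (B : ConvexBodyO n) : ∃ r > 0, ∀ y : Euc n, ‖y‖ < r → y ∈ B.carrier := by
  obtain ⟨r, hr, h⟩ := Metric.isOpen_iff.mp isOpen_interior 0 B.zero_mem_interior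
  exact ⟨r, hr, fun y hy => interior_subset (h (by simpa [Metric.mem_ball] using hy))⟩

lemma radialSet_compact {n : ℕ} (B : ConvexBodyO n) {z : Euc n} (hz : z ∈ uSphere n) :
    IsCompact {t : ℝ | 0 ≤ t ∧ t • z ∈ B.carrier} := by
  obtain ⟨R, hR⟩ := B.isCompact.isBounded.subset_closedBall 0
  have hcl : IsClosed {t : ℝ | 0 ≤ t ∧ t • z ∈ B.carrier} := by
    have : {t : ℝ | 0 ≤ t ∧ t • z ∈ B.carrier}
        = Ici 0 ∩ (fun t : ℝ => t • z) ⁻¹' B.carrier := by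
      ext t; simp [Set.mem_setOf_eq]
    rw [this]
    exact isClosed_Ici.inter (B.isCompact.isClosed.preimage (continuous_id.smul continuous_const))
  have hbd : {t : ℝ | 0 ≤ t ∧ t • z ∈ B.carrier} ⊆ Set.Icc 0 R := by
    rintro t ⟨ht0, htm⟩
    refine ⟨ht0, ?_⟩
    have := hR htm
    simp only [Metric.mem_closedBall, dist_zero_right] at this
    calc t = ‖t • z‖ := by
          rw [norm_smul, norm_one_of_sphere hz, Real.norm_eq_abs, abs_of_nonneg ht0]; ring
    _ ≤ R := this
  exact (isCompact_Icc).of_isClosed_subset hcl hbd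

lemma radialSet_nonempty {n : ℕ} (B : ConvexBodyO n) (z : Euc n) :
    (0:ℝ) ∈ {t : ℝ | 0 ≤ t ∧ t • z ∈ B.carrier} :=
  ⟨le_refl 0, by simpa using interior_subset B.zero_mem_interior⟩

lemma radialFn_mem {n : ℕ} (B : ConvexBodyO n) {z : Euc n} (hz : z ∈ uSphere n) :
    radialFn B z • z ∈ B.carrier :=
  ((radialSet_compact B hz).sSup_mem ⟨0, radialSet_nonempty B z⟩).2

lemma le_radialFn {n : ℕ} (B : ConvexBodyO n) {z : Euc n} (hz : z ∈ uSphere n)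
    {t : ℝ} (ht : 0 ≤ t) (h : t • z ∈ B.carrier) : t ≤ radialFn B z :=
  le_csSup (radialSet_compact B hz).isBounded.bddAbove ⟨ht, h⟩

lemma radialFn_pos {n : ℕ} (B : ConvexBodyO n) {z : Euc n} (hz : z ∈ uSphere n) :
    0 < radialFn B z := by
  obtain ⟨r, hr, h⟩ := bodyBall B
  have : r/2 ≤ radialFn B z := by
    refine le_radialFn B hz (by positivity) (h _ ?_)
    rw [norm_smul, norm_one_of_sphere hz, Real.norm_eq_abs,
      abs_of_nonneg (by positivity : (0:ℝ) ≤ r/2)]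
    linarith
  linarith

lemma norm_le_radialFn {n : ℕ} (B : ConvexBodyO n) {y : Euc n} (hy : y ∈ B.carrier)
    (hy0 : y ≠ 0) : ‖y‖ ≤ radialFn B (‖y‖⁻¹ • y) := by
  have hn : ‖y‖ ≠ 0 := norm_ne_zero_iff.mpr hy0
  have hz : (‖y‖⁻¹ • y) ∈ uSphere n := by
    simp [uSphere, norm_smul, abs_of_nonneg (inv_nonneg.mpr (norm_nonneg y)),
      inv_mul_cancel₀ hn]
  refine le_radialFn B hz (norm_nonneg y) ?_
  rw [smul_smul, mul_inv_cancel₀ hn, one_smul]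
  exact hy

lemma key_norm_sq {n : ℕ} {v x : Euc n} (hx1 : ‖x‖ = 1) (hv : ⟪v, x⟫ = 0) (ρ : ℝ) :
    ‖-v + ρ • x‖ ^ 2 = ‖v‖ ^ 2 + ρ ^ 2 := by
  rw [norm_add_sq_real, norm_neg, norm_smul, hx1, real_inner_smul_right, inner_neg_left, hv]
  simp [sq_abs]

lemma key_sqrt {n : ℕ} {v x : Euc n} (hx1 : ‖x‖ = 1) (hv : ⟪v, x⟫ = 0) (ρ : ℝ) :
    Real.sqrt (‖v‖ ^ 2 + ρ ^ 2) = ‖-v + ρ • x‖ := by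
  rw [← key_norm_sq hx1 hv ρ, Real.sqrt_sq (norm_nonneg _)]

lemma key_pos {n : ℕ} {v x : Euc n} (hx1 : ‖x‖ = 1) (hv : ⟪v, x⟫ = 0) {ρ : ℝ}
    (hρ : 0 < ρ) : 0 < ‖-v + ρ • x‖ := by
  have h := key_norm_sq hx1 hv ρ
  nlinarith [norm_nonneg (-v + ρ • x), sq_nonneg ‖v‖]

/-- Representation of the generalized Gauss map via the subdifferential of the radial
function: every `N ∈ α_F(x)` has the form `(-v + ρ(x)x)/√(|v|² + ρ(x)²)` for a unique
`v ∈ ∂ρ(x)`, and `α_F(x)` is exactly the image of `∂ρ(x)` under this formula. -/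
theorem statement9 (n : ℕ) (hn : 1 ≤ n) (B : ConvexBodyO n)
    (x : Euc n) (hx : x ∈ uSphere n) :
    (∀ N ∈ gaussMap B x, ∃! v : Euc n, v ∈ subdiffS n (radialFn B) x ∧
      N = (Real.sqrt (‖v‖ ^ 2 + radialFn B x ^ 2))⁻¹ • (-v + radialFn B x • x)) ∧
    gaussMap B x =
      (fun v => (Real.sqrt (‖v‖ ^ 2 + radialFn B x ^ 2))⁻¹ • (-v + radialFn B x • x)) ''
        subdiffS n (radialFn B) x := by
  have hx1 : ‖x‖ = 1 := norm_one_of_sphere hx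
  set ρ := radialFn B x with hρdef
  have hρ : 0 < ρ := radialFn_pos B hx
  have main : ∀ N ∈ gaussMap B x, ∃! v : Euc n, v ∈ subdiffS n (radialFn B) x ∧
      N = (Real.sqrt (‖v‖ ^ 2 + ρ ^ 2))⁻¹ • (-v + ρ • x) := by
    intro N hN
    obtain ⟨hNs, hN2⟩ := hN
    have hN1 : ‖N‖ = 1 := norm_one_of_sphere hNs
    have ha : 0 < ⟪x, N⟫ := by
      obtain ⟨r, hr, hball⟩ := bodyBall B
      have hm : (r/2) • N ∈ B.carrier := by
        apply hball
        rw [norm_smul, hN1, Real.norm_eq_abs, abs_of_nonneg (by positivity : (0:ℝ) ≤ r/2)]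
        linarith
      have h1 := hN2 _ hm
      rw [real_inner_smul_left, real_inner_smul_left, real_inner_self_eq_norm_sq, hN1] at h1
      nlinarith
    set a := ⟪x, N⟫ with hadef
    have ha' : a ≠ 0 := ne_of_gt ha
    set lam := ρ / a with hlamdef
    have hlam : 0 < lam := div_pos hρ ha
    set v := ρ • x - lam • N with hvdef
    have hvx : ⟪v, x⟫ = 0 := by
      rw [hvdef, inner_sub_left, real_inner_smul_left, real_inner_smul_left,
        real_inner_self_eq_norm_sq, hx1, real_inner_comm x N, ← hadef, hlamdef]
      field_simp
      ring
    have hw : -v + ρ • x = lam • N := by rw [hvdef]; module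
    have hnormw : ‖-v + ρ • x‖ = lam := by
      rw [hw, norm_smul, hN1, Real.norm_eq_abs, abs_of_pos hlam, mul_one]
    have hform : N = (Real.sqrt (‖v‖ ^ 2 + ρ ^ 2))⁻¹ • (-v + ρ • x) := by
      rw [key_sqrt hx1 hvx, hnormw, hw, smul_smul, inv_mul_cancel₀ (ne_of_gt hlam), one_smul]
    refine ⟨v, ⟨⟨hvx, ?_⟩, hform⟩, ?_⟩
    · intro z hz
      have hρz : 0 ≤ radialFn B z := le_of_lt (radialFn_pos B hz)
      have h2 := hN2 _ (radialFn_mem B hz)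
      rw [real_inner_smul_left, real_inner_smul_left] at h2
      rw [hw, real_inner_smul_left]
      calc radialFn B z * (lam * ⟪N, z⟫)
          = lam * (radialFn B z * ⟪z, N⟫) := by rw [real_inner_comm N z]; ring
        _ ≤ lam * (ρ * a) := mul_le_mul_of_nonneg_left h2 (le_of_lt hlam)
        _ = ρ ^ 2 := by rw [hlamdef, ← mul_assoc, mul_comm (ρ / a) ρ, mul_assoc, div_mul_cancel₀ ρ ha']; ring
    · rintro v' ⟨⟨hv'x, _⟩, hEq⟩
      have hcN : ‖-v' + ρ • x‖ • N = -v' + ρ • x := by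
        rw [hEq, key_sqrt hx1 hv'x, smul_smul,
          mul_inv_cancel₀ (ne_of_gt (key_pos hx1 hv'x hρ)), one_smul]
      set c := ‖-v' + ρ • x‖ with hcdef
      have hcpos : 0 < c := key_pos hx1 hv'x hρ
      have hca : c * a = ρ := by
        have h := congrArg (fun w : Euc n => ⟪w, x⟫) hcN
        simp only [real_inner_smul_left, inner_add_left, inner_neg_left, hv'x,
          real_inner_self_eq_norm_sq, hx1, one_pow, mul_one, neg_zero, zero_add] at h
        rw [real_inner_comm x N] at h
        exact h
      have hclam : c = lam := by rw [hlamdef]; exact (eq_div_iff ha').mpr hca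
      have hv' : v' = ρ • x - c • N := by
        rw [eq_sub_iff_add_eq, hcN]
        module
      rw [hv', hclam, hvdef]
  refine ⟨main, ?_⟩
  ext N
  constructor
  · intro hN
    obtain ⟨v, ⟨hv, hform⟩, -⟩ := main N hN
    exact ⟨v, hv, hform.symm⟩
  · rintro ⟨v, ⟨hvx, hsub⟩, rfl⟩
    have hc := key_sqrt hx1 hvx ρ
    have hcpos : 0 < ‖-v + ρ • x‖ := key_pos hx1 hvx hρ
    refine ⟨?_, ?_⟩
    · show (Real.sqrt (‖v‖ ^ 2 + ρ ^ 2))⁻¹ • (-v + ρ • x) ∈ uSphere n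
      simp only [uSphere, Metric.mem_sphere, dist_zero_right, hc, norm_smul,
        Real.norm_eq_abs, abs_of_pos (inv_pos.mpr hcpos)]
      exact inv_mul_cancel₀ (ne_of_gt hcpos)
    · intro y hy
      show ⟪y, (Real.sqrt (‖v‖ ^ 2 + ρ ^ 2))⁻¹ • (-v + ρ • x)⟫
          ≤ ⟪ρ • x, (Real.sqrt (‖v‖ ^ 2 + ρ ^ 2))⁻¹ • (-v + ρ • x)⟫
      rw [hc, real_inner_smul_right, real_inner_smul_right]
      refine mul_le_mul_of_nonneg_left ?_ (inv_nonneg.mpr (norm_nonneg _))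
      have hrhs : ⟪ρ • x, -v + ρ • x⟫ = ρ ^ 2 := by
        rw [real_inner_smul_left, inner_add_right, inner_neg_right, real_inner_smul_right,
          real_inner_self_eq_norm_sq, hx1, real_inner_comm v x, hvx]
        ring
      rw [hrhs]
      rcases eq_or_ne y 0 with rfl | hy0
      · simp; positivity
      · have hyn : ‖y‖ ≠ 0 := norm_ne_zero_iff.mpr hy0
        set z := ‖y‖⁻¹ • y with hzdef
        have hz : z ∈ uSphere n := by
          simp [uSphere, hzdef, norm_smul, abs_of_nonneg (inv_nonneg.mpr (norm_nonneg y)),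
            inv_mul_cancel₀ hyn]
        have hρz := norm_le_radialFn B hy hy0
        have hs := hsub z hz
        rw [← hρdef] at hs
        have hyz : ⟪y, -v + ρ • x⟫ = ‖y‖ * ⟪z, -v + ρ • x⟫ := by
          rw [hzdef, real_inner_smul_left]
          field_simp
        rw [hyz]
        rw [← real_inner_comm z (-v + ρ • x)]
        rcases le_or_gt ⟪-v + ρ • x, z⟫ 0 with ht | ht
        · have h0 : ‖y‖ * ⟪-v + ρ • x, z⟫ ≤ 0 := mul_nonpos_of_nonneg_of_nonpos (norm_nonneg y) ht
          nlinarith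
        · calc ‖y‖ * ⟪-v + ρ • x, z⟫ ≤ radialFn B z * ⟪-v + ρ • x, z⟫ :=
              mul_le_mul_of_nonneg_right hρz (le_of_lt ht)
            _ ≤ ρ ^ 2 := hs
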